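/- For any square matrices M, L ∈ ℝ^{n×n} and any vectors x ≤ x̂ in ℝ^n, the componentwise inequality (⌈M⌉^Mzl + ⌈L⌉^Mzl) x + (⌊M⌋^Mzl + ⌊L⌋^Mzl) x̂ ≤ ⌈M + L⌉^Mzl x + ⌊M + L⌋^Mzl x̂ holds. -/

import Mathlib

open Matrix

/-- Entrywise nonnegative part of a matrix. -/
noncomputable def mpos {p n : ℕ} (A : Matrix (Fin p) (Fin n) ℝ) : Matrix (Fin p) (Fin n) ℝ :=
  fun i j => max (A i j) 0

/-- Entrywise nonpositive part of a matrix. -/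
noncomputable def mneg {p n : ℕ} (A : Matrix (Fin p) (Fin n) ℝ) : Matrix (Fin p) (Fin n) ℝ :=
  fun i j => min (A i j) 0

/-- Metzler part of a square matrix. -/
noncomputable def mzl {n : ℕ} (A : Matrix (Fin n) (Fin n) ℝ) : Matrix (Fin n) (Fin n) ℝ :=
  fun i j => if 0 ≤ A i j ∨ i = j then A i j else 0

/-- Non-Metzler part of a square matrix. -/
noncomputable def nmzl {n : ℕ} (A : Matrix (Fin n) (Fin n) ℝ) : Matrix (Fin n) (Fin n) ℝ :=
  A - mzl A

theorem metzler_superadditive {n : ℕ} (M L : Matrix (Fin n) (Fin n) ℝ)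
    (x x' : Fin n → ℝ) (hxx' : x ≤ x') :
    (mzl M + mzl L).mulVec x + (nmzl M + nmzl L).mulVec x' ≤
      (mzl (M + L)).mulVec x + (nmzl (M + L)).mulVec x' := by
  intro i
  simp only [Pi.add_apply, mulVec, dotProduct, Matrix.add_apply, ← Finset.sum_add_distrib]
  apply Finset.sum_le_sum
  intro j _
  have hx := hxx' j
  have key : mzl (M + L) i j ≤ mzl M i j + mzl L i j := by
    simp only [mzl, Matrix.add_apply]
    by_cases hij : i = j
    · simp [hij]
    · simp only [hij, or_false]
      split_ifs <;> linarith
  have hM : nmzl M i j = M i j - mzl M i j := by simp [nmzl]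
  have hL : nmzl L i j = L i j - mzl L i j := by simp [nmzl]
  have hML : nmzl (M + L) i j = M i j + L i j - mzl (M + L) i j := by
    simp [nmzl]
  rw [hM, hL, hML]
  nlinarith [mul_le_mul_of_nonneg_left (sub_nonneg.mpr hx) (sub_nonneg.mpr key)]
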